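/- arXiv:1901.10382 — 6 statements merged into one kernel-verified Lean document; each statement's English description precedes it below -/
import Mathlib

section
/- For the EKI flow du^(j)/dt = -(1/J)∑_{k=1}^J D_{jk}(𝔲)(u^(k) - ū) with linear observation operator G(u) = A u, each ensemble member satisfies the preconditioned gradient flow du^(j)/dt = -C(𝔲) ∇_u ℓ_Y(A u^(j), y), where ℓ_Y(y', y) = (1/2)‖Γ^{-1/2}(y' - y)‖²_Y and C(𝔲) is the empirical covariance of the ensemble. That is, the two right-hand sides coincide as vectors in X. -/
open scoped BigOperators RealInnerProductSpace

/-- For linear observation operator `G = A`, the EKI flow right-hand side coincides with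
the gradient flow for the least-squares loss preconditioned by the empirical covariance. -/
theorem eki_flow_is_preconditioned_gradient_flow
    {X Y : Type*} [NormedAddCommGroup X] [InnerProductSpace ℝ X] [FiniteDimensional ℝ X]
    [NormedAddCommGroup Y] [InnerProductSpace ℝ Y] [FiniteDimensional ℝ Y]
    (J : ℕ) (hJ : 0 < J) (u : Fin J → X)
    (ubar : X) (hubar : ubar = (J : ℝ)⁻¹ • ∑ j, u j)
    (A : X →ₗ[ℝ] Y) (y : Y)
    -- `S` plays the role of `Γ^{-1/2}`: a symmetric operator, so that `Γ⁻¹ = S ∘ S`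
    (S : Y →ₗ[ℝ] Y) (hS : ∀ a b, ⟪S a, b⟫ = ⟪a, S b⟫)
    (Gbar : Y) (hGbar : Gbar = (J : ℝ)⁻¹ • ∑ m, A (u m))
    (D : Fin J → Fin J → ℝ)
    (hD : ∀ j k, D j k = ⟪S (A (u j) - y), S (A (u k) - Gbar)⟫)
    (C : X → X)
    (hC : ∀ v, C v = (J : ℝ)⁻¹ • ∑ m, ⟪v, u m - ubar⟫ • (u m - ubar)) :
    ∀ j, -((J : ℝ)⁻¹ • ∑ k, D j k • (u k - ubar))
        = -(C (LinearMap.adjoint A (S (S (A (u j) - y))))) := by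
  intro j
  have hA : A ubar = Gbar := by
    rw [hubar, hGbar, map_smul, map_sum]
  rw [hC]
  congr 2
  refine Finset.sum_congr rfl fun k _ => ?_
  congr 1
  rw [hD, LinearMap.adjoint_inner_left, map_sub A, hA, ← hS]
end

section
/- For the TEKI flow du^(j)/dt = -(1/J)∑_{k=1}^J [D_{jk}(𝔲) + ⟨C_0^{-1} u^(j), u^(k) - ū⟩_X](u^(k) - ū) with linear G(u) = Au, each ensemble member satisfies du^(j)/dt = -C(𝔲) ∇_u 𝓘(u^(j); y), where 𝓘(u; y) = (1/2)‖Γ^{-1/2}(Au - y)‖²_Y + (1/2)‖C_0^{-1/2} u‖²_X and C(𝔲) is the empirical covariance. -/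
open scoped BigOperators RealInnerProductSpace

/-- For linear observation operator `G = A`, the TEKI flow right-hand side coincides with
the gradient flow for the Tikhonov-regularized least-squares loss
`𝓘(u) = ½‖Γ^{-1/2}(Au - y)‖² + ½‖C₀^{-1/2}u‖²`, preconditioned by the empirical covariance. -/
theorem teki_flow_is_preconditioned_gradient_flow
    {X Y : Type*} [NormedAddCommGroup X] [InnerProductSpace ℝ X] [FiniteDimensional ℝ X]
    [NormedAddCommGroup Y] [InnerProductSpace ℝ Y] [FiniteDimensional ℝ Y]
    (J : ℕ) (hJ : 0 < J) (u : Fin J → X)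
    (ubar : X) (hubar : ubar = (J : ℝ)⁻¹ • ∑ j, u j)
    (A : X →ₗ[ℝ] Y) (y : Y)
    -- `S` plays the role of `Γ^{-1/2}` (so `Γ⁻¹ = S ∘ S`)
    (S : Y →ₗ[ℝ] Y) (hS : ∀ a b, ⟪S a, b⟫ = ⟪a, S b⟫)
    -- `T` plays the role of `C₀⁻¹`
    (T : X →ₗ[ℝ] X) (hT : ∀ a b, ⟪T a, b⟫ = ⟪a, T b⟫)
    (Gbar : Y) (hGbar : Gbar = (J : ℝ)⁻¹ • ∑ m, A (u m))
    (D : Fin J → Fin J → ℝ)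
    (hD : ∀ j k, D j k = ⟪S (A (u j) - y), S (A (u k) - Gbar)⟫)
    (E : Fin J → Fin J → ℝ)
    (hE : ∀ j k, E j k = D j k + ⟪T (u j), u k - ubar⟫)
    (C : X → X)
    (hC : ∀ v, C v = (J : ℝ)⁻¹ • ∑ m, ⟪v, u m - ubar⟫ • (u m - ubar)) :
    ∀ j, -((J : ℝ)⁻¹ • ∑ k, E j k • (u k - ubar))
        = -(C (LinearMap.adjoint A (S (S (A (u j) - y))) + T (u j))) := by
  intro j
  rw [hC]
  have hA : A ubar = Gbar := by
    rw [hGbar, hubar]; simp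
  rw [neg_inj]
  refine congrArg _ (Finset.sum_congr rfl fun k _ => ?_)
  have key : ∀ (v : Y) (w : X), ⟪(LinearMap.adjoint A) (S (S v)), w⟫ = ⟪S v, S (A w)⟫ := by
    intro v w; rw [LinearMap.adjoint_inner_left, hS]
  congr 1
  rw [hE, hD, inner_add_left, key, map_sub A (u k) ubar, hA]
end

section
/- Along the TEKI flow, the empirical covariance C(t) = C(𝔲(t)) satisfies, for every fixed vector v ∈ X, d/dt ⟨v, C(t) v⟩ = -2‖C_0^{-1/2} C(t) v‖²_X - 2J^{-2}‖Γ^{-1/2} ∑_{j=1}^J ⟨v, u^(j)-ū⟩ (G(u^(j)) - Ḡ)‖²_Y ≤ 0, using that C(t) v = (1/J)∑_j ⟨v, u^(j)-ū⟩ (u^(j) - ū). In particular, t ↦ ⟨v, C(t)v⟩ is nonincreasing. -/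
open scoped BigOperators RealInnerProductSpace

/-- Along the TEKI flow, with `R = C₀^{-1/2}` and `S = Γ^{-1/2}`, the quadratic form
`t ↦ ⟨v, C(t)v⟩` of the empirical covariance has derivative
`-2‖C₀^{-1/2}C(t)v‖² - 2J⁻²‖Γ^{-1/2}∑ⱼ⟨v,uⱼ-ū⟩(G(uⱼ)-Ḡ)‖² ≤ 0`;
in particular it is nonincreasing. -/
theorem teki_covariance_quadratic_form_decreasing
    {X Y : Type*} [NormedAddCommGroup X] [InnerProductSpace ℝ X] [FiniteDimensional ℝ X]
    [NormedAddCommGroup Y] [InnerProductSpace ℝ Y] [FiniteDimensional ℝ Y]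
    (J : ℕ) (hJ : 0 < J) (Tend : ℝ) (hT : 0 < Tend)
    (u : ℝ → Fin J → X)
    (G : X → Y) (y : Y)
    (S : Y →ₗ[ℝ] Y) (hS : ∀ a b, ⟪S a, b⟫ = ⟪a, S b⟫)
    (R : X →ₗ[ℝ] X) (hR : ∀ a b, ⟪R a, b⟫ = ⟪a, R b⟫)
    (ubar : ℝ → X) (hubar : ∀ t, ubar t = (J : ℝ)⁻¹ • ∑ j, u t j)
    (Gbar : ℝ → Y) (hGbar : ∀ t, Gbar t = (J : ℝ)⁻¹ • ∑ m, G (u t m))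
    (E : ℝ → Fin J → Fin J → ℝ)
    (hE : ∀ t j k, E t j k
        = ⟪S (G (u t j) - y), S (G (u t k) - Gbar t)⟫
          + ⟪R (R (u t j)), u t k - ubar t⟫)
    (hflow : ∀ t ∈ Set.Ico (0 : ℝ) Tend, ∀ j,
      HasDerivWithinAt (fun s => u s j)
        (-((J : ℝ)⁻¹ • ∑ k, E t j k • (u t k - ubar t))) (Set.Ico (0 : ℝ) Tend) t)
    (C : ℝ → X → X)
    (hC : ∀ t v, C t v = (J : ℝ)⁻¹ • ∑ j, ⟪v, u t j - ubar t⟫ • (u t j - ubar t)) :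
    ∀ v : X,
      (∀ t ∈ Set.Ico (0 : ℝ) Tend,
        HasDerivWithinAt (fun s => ⟪v, C s v⟫)
          (-2 * ‖R (C t v)‖ ^ 2
            - 2 * ((J : ℝ)⁻¹) ^ 2 *
              ‖S (∑ j, ⟪v, u t j - ubar t⟫ • (G (u t j) - Gbar t))‖ ^ 2)
          (Set.Ico (0 : ℝ) Tend) t
        ∧ (-2 * ‖R (C t v)‖ ^ 2
            - 2 * ((J : ℝ)⁻¹) ^ 2 *
              ‖S (∑ j, ⟪v, u t j - ubar t⟫ • (G (u t j) - Gbar t))‖ ^ 2) ≤ 0)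
      ∧ AntitoneOn (fun s => ⟪v, C s v⟫) (Set.Ico (0 : ℝ) Tend) := by
  intro v
  have hJ' : (J : ℝ) ≠ 0 := Nat.cast_ne_zero.mpr hJ.ne'
  have hnp : ∀ t : ℝ,
      (-2 * ‖R (C t v)‖ ^ 2
        - 2 * ((J : ℝ)⁻¹) ^ 2 *
          ‖S (∑ j, ⟪v, u t j - ubar t⟫ • (G (u t j) - Gbar t))‖ ^ 2) ≤ 0 := by
    intro t
    have h1 : (0:ℝ) ≤ ‖R (C t v)‖ ^ 2 := sq_nonneg _
    have h2 : (0:ℝ) ≤ ((J : ℝ)⁻¹) ^ 2 *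
        ‖S (∑ j, ⟪v, u t j - ubar t⟫ • (G (u t j) - Gbar t))‖ ^ 2 := by positivity
    linarith
  have key : ∀ t ∈ Set.Ico (0 : ℝ) Tend,
      HasDerivWithinAt (fun s => ⟪v, C s v⟫)
        (-2 * ‖R (C t v)‖ ^ 2
          - 2 * ((J : ℝ)⁻¹) ^ 2 *
            ‖S (∑ j, ⟪v, u t j - ubar t⟫ • (G (u t j) - Gbar t))‖ ^ 2)
        (Set.Ico (0 : ℝ) Tend) t := by
    intro t ht
    set D := Set.Ico (0 : ℝ) Tend with hDdef
    set a : Fin J → ℝ := fun j => ⟪v, u t j - ubar t⟫ with ha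
    -- sum of centered ensemble is zero
    have hsum_e : ∑ j, (u t j - ubar t) = 0 := by
      rw [Finset.sum_sub_distrib, Finset.sum_const, Finset.card_univ, Fintype.card_fin,
        hubar t, ← Nat.cast_smul_eq_nsmul ℝ, smul_smul, mul_inv_cancel₀ hJ', one_smul, sub_self]
    have hsum_a : ∑ j, a j = 0 := by
      simp only [ha]
      rw [← inner_sum, hsum_e, inner_zero_right]
    -- derivatives of the ensemble members and the mean
    set d : Fin J → X := fun j => -((J : ℝ)⁻¹ • ∑ k, E t j k • (u t k - ubar t)) with hd
    have hu : ∀ j, HasDerivWithinAt (fun s => u s j) (d j) D t := fun j => hflow t ht j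
    set db : X := (J : ℝ)⁻¹ • ∑ j, d j with hdb
    have hub : HasDerivWithinAt ubar db D t := by
      have hfun : ubar = fun s => (J : ℝ)⁻¹ • ∑ j, u s j := funext hubar
      rw [hfun, hdb]
      exact (HasDerivWithinAt.fun_sum (fun j _ => hu j)).const_smul _
    have he' : ∀ j, HasDerivWithinAt (fun s => u s j - ubar s) (d j - db) D t :=
      fun j => (hu j).sub hub
    have hφ : ∀ j, HasDerivWithinAt (fun s => ⟪v, u s j - ubar s⟫) ⟪v, d j - db⟫ D t := by
      intro j
      have := (hasDerivWithinAt_const t D v).inner ℝ (he' j)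
      simpa using this
    have hsq : ∀ j, HasDerivWithinAt
        (fun s => ⟪v, u s j - ubar s⟫ * ⟪v, u s j - ubar s⟫)
        (⟪v, d j - db⟫ * a j + a j * ⟪v, d j - db⟫) D t :=
      fun j => (hφ j).mul (hφ j)
    have hf : HasDerivWithinAt (fun s => ⟪v, C s v⟫)
        ((J : ℝ)⁻¹ * ∑ j, (⟪v, d j - db⟫ * a j + a j * ⟪v, d j - db⟫)) D t := by
      have hfun : (fun s => ⟪v, C s v⟫)
          = fun s => (J : ℝ)⁻¹ * ∑ j, ⟪v, u s j - ubar s⟫ * ⟪v, u s j - ubar s⟫ := by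
        funext s
        rw [hC s v]
        rw [real_inner_smul_right, inner_sum]
        congr 1
        exact Finset.sum_congr rfl fun j _ => by rw [real_inner_smul_right]
      rw [hfun]
      exact (HasDerivWithinAt.fun_sum (fun j _ => hsq j)).const_mul _
    -- value of ⟪v, d j⟫
    have hvd : ∀ j, ⟪v, d j⟫ = -((J : ℝ)⁻¹ * ∑ k, E t j k * a k) := by
      intro j
      rw [hd]
      rw [inner_neg_right, real_inner_smul_right, inner_sum]
      congr 2
      exact Finset.sum_congr rfl fun k _ => by rw [real_inner_smul_right]
    -- reduce the sum of derivatives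
    have hstep : ∑ j, (⟪v, d j - db⟫ * a j + a j * ⟪v, d j - db⟫)
        = 2 * ∑ j, a j * ⟪v, d j⟫ := by
      have h1 : ∀ j, ⟪v, d j - db⟫ * a j + a j * ⟪v, d j - db⟫
          = 2 * (a j * ⟪v, d j⟫) - (2 * ⟪v, db⟫) * a j := by
        intro j; rw [inner_sub_right]; ring
      rw [Finset.sum_congr rfl fun j _ => h1 j, Finset.sum_sub_distrib,
        ← Finset.mul_sum, ← Finset.mul_sum, hsum_a, mul_zero, sub_zero]
    -- double-sum identity helpers
    have hy0 : ∑ j, a j • (G (u t j) - y) = ∑ j, a j • (G (u t j) - Gbar t) := by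
      have h1 : ∀ j, a j • (G (u t j) - y)
          = a j • (G (u t j) - Gbar t) + a j • (Gbar t - y) := by
        intro j; rw [← smul_add]; congr 1; abel
      rw [Finset.sum_congr rfl fun j _ => h1 j, Finset.sum_add_distrib,
        ← Finset.sum_smul, hsum_a, zero_smul, add_zero]
    have hP : ∑ j, a j * ∑ k, ⟪S (G (u t j) - y), S (G (u t k) - Gbar t)⟫ * a k
        = ⟪S (∑ j, a j • (G (u t j) - y)), S (∑ k, a k • (G (u t k) - Gbar t))⟫ := by
      rw [map_sum, map_sum, sum_inner]
      refine Finset.sum_congr rfl fun j _ => ?_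
      rw [map_smul, real_inner_smul_left, inner_sum, Finset.mul_sum, Finset.mul_sum]
      refine Finset.sum_congr rfl fun k _ => ?_
      rw [map_smul, real_inner_smul_right]
      ring
    have hQ : ∑ j, a j * ∑ k, ⟪R (R (u t j)), u t k - ubar t⟫ * a k
        = ⟪R (R (∑ j, a j • u t j)), ∑ k, a k • (u t k - ubar t)⟫ := by
      rw [map_sum, map_sum, sum_inner]
      refine Finset.sum_congr rfl fun j _ => ?_
      rw [map_smul, map_smul, real_inner_smul_left, inner_sum, Finset.mul_sum, Finset.mul_sum]
      refine Finset.sum_congr rfl fun k _ => ?_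
      rw [real_inner_smul_right]
      ring
    have hu_e : ∑ j, a j • u t j = ∑ j, a j • (u t j - ubar t) := by
      have h1 : ∀ j, a j • u t j = a j • (u t j - ubar t) + a j • ubar t := by
        intro j; rw [← smul_add]; congr 1; abel
      rw [Finset.sum_congr rfl fun j _ => h1 j, Finset.sum_add_distrib,
        ← Finset.sum_smul, hsum_a, zero_smul, add_zero]
    have hw : ∑ j, a j • (u t j - ubar t) = (J : ℝ) • C t v := by
      rw [hC t v, smul_smul, mul_inv_cancel₀ hJ', one_smul]
    have hQval : ⟪R (R ((J : ℝ) • C t v)), (J : ℝ) • C t v⟫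
        = (J : ℝ) ^ 2 * ‖R (C t v)‖ ^ 2 := by
      rw [hR, map_smul, real_inner_smul_left, real_inner_smul_right,
        real_inner_self_eq_norm_sq]
      ring
    have hdouble : ∑ j, a j * ∑ k, E t j k * a k
        = ‖S (∑ j, a j • (G (u t j) - Gbar t))‖ ^ 2
          + (J : ℝ) ^ 2 * ‖R (C t v)‖ ^ 2 := by
      have hsplit : ∑ j, a j * ∑ k, E t j k * a k
          = (∑ j, a j * ∑ k, ⟪S (G (u t j) - y), S (G (u t k) - Gbar t)⟫ * a k)
            + ∑ j, a j * ∑ k, ⟪R (R (u t j)), u t k - ubar t⟫ * a k := by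
        rw [← Finset.sum_add_distrib]
        refine Finset.sum_congr rfl fun j _ => ?_
        rw [← mul_add, ← Finset.sum_add_distrib]
        congr 1
        refine Finset.sum_congr rfl fun k _ => ?_
        rw [hE, add_mul]
      rw [hsplit, hP, hQ, hy0, hu_e, hw, hQval, real_inner_self_eq_norm_sq]
    -- final derivative value equality
    have h4 : ∑ j, a j * ⟪v, d j⟫
        = -((J : ℝ)⁻¹ * ∑ j, a j * ∑ k, E t j k * a k) := by
      calc ∑ j, a j * ⟪v, d j⟫
          = ∑ j, -((J : ℝ)⁻¹ * (a j * ∑ k, E t j k * a k)) :=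
            Finset.sum_congr rfl fun j _ => by rw [hvd j]; ring
        _ = -((J : ℝ)⁻¹ * ∑ j, a j * ∑ k, E t j k * a k) := by
            rw [Finset.sum_neg_distrib, ← Finset.mul_sum]
    have hDeq : (J : ℝ)⁻¹ * ∑ j, (⟪v, d j - db⟫ * a j + a j * ⟪v, d j - db⟫)
        = -2 * ‖R (C t v)‖ ^ 2
          - 2 * ((J : ℝ)⁻¹) ^ 2 *
            ‖S (∑ j, a j • (G (u t j) - Gbar t))‖ ^ 2 := by
      rw [hstep, h4, hdouble]
      field_simp
      ring
    exact hDeq ▸ hf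
  refine ⟨fun t ht => ⟨key t ht, hnp t⟩, ?_⟩
  have hcont : ContinuousOn (fun s => ⟪v, C s v⟫) (Set.Ico (0 : ℝ) Tend) :=
    fun t ht => (key t ht).continuousWithinAt
  have hmem : ∀ x ∈ interior (Set.Ico (0 : ℝ) Tend),
      HasDerivAt (fun s => ⟪v, C s v⟫)
        (-2 * ‖R (C x v)‖ ^ 2
          - 2 * ((J : ℝ)⁻¹) ^ 2 *
            ‖S (∑ j, ⟪v, u x j - ubar x⟫ • (G (u x j) - Gbar x))‖ ^ 2) x := by
    intro x hx
    rw [interior_Ico] at hx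
    have hxm : Set.Ico (0 : ℝ) Tend ∈ nhds x := Ico_mem_nhds hx.1 hx.2
    exact (key x (Set.Ioo_subset_Ico_self hx)).hasDerivAt hxm
  refine antitoneOn_of_deriv_nonpos (convex_Ico _ _) hcont
    (fun x hx => (hmem x hx).differentiableAt.differentiableWithinAt) ?_
  intro x hx
  rw [(hmem x hx).deriv]
  exact hnp x
end

section
/- (Constrained KKT vs unconstrained minimizer.) Let Ω be a symmetric positive definite operator on a finite-dimensional inner product space X, ℬ ⊆ X a subspace, P_ℬ the orthogonal projection onto ℬ and P_⊥ = I - P_ℬ. Let Ω_ℬ = P_ℬ Ω P_ℬ restricted to ℬ (positive definite on ℬ). Suppose u† ∈ X and u†_ℬ ∈ ℬ satisfy Ω(u† + u⊥_0) = b and Ω(u†_ℬ + u⊥_0) = b + v† for some fixed u⊥_0, b ∈ X and some v† orthogonal to ℬ. Then u†_ℬ = P_ℬ u† + Ω_ℬ^{-1} P_ℬ Ω P_⊥ u†. In particular, if ⟨u, Ω v⟩ = 0 for all u ∈ ℬ and v ⊥ ℬ, then u†_ℬ = P_ℬ u†. -/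
open scoped RealInnerProductSpace

/-- Constrained vs unconstrained KKT points: with `Ω` symmetric positive definite,
`u†_ℬ = P_ℬ u† + Ω_ℬ⁻¹ P_ℬ Ω P_⊥ u†`; and if `ℬ` and `ℬᗮ` are uncorrelated through `Ω`
then `u†_ℬ = P_ℬ u†`. -/
theorem constrained_kkt_vs_unconstrained
    {X : Type*} [NormedAddCommGroup X] [InnerProductSpace ℝ X] [FiniteDimensional ℝ X]
    (Omega : X →ₗ[ℝ] X)
    (hsym : ∀ a b, ⟪Omega a, b⟫ = ⟪a, Omega b⟫)
    (hpd : ∀ v : X, v ≠ 0 → 0 < ⟪v, Omega v⟫)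
    (B : Submodule ℝ X)
    (OmegaB : B →ₗ[ℝ] B)
    (hOB : ∀ b : B, OmegaB b = B.orthogonalProjectionOnto (Omega b))
    (OmegaBinv : B →ₗ[ℝ] B)
    (hinv1 : ∀ b, OmegaBinv (OmegaB b) = b)
    (hinv2 : ∀ b, OmegaB (OmegaBinv b) = b)
    (udag : X) (udagB : B) (uperp0 b v : X)
    (hv : v ∈ Bᗮ)
    (h1 : Omega (udag + uperp0) = b)
    (h2 : Omega ((udagB : X) + uperp0) = b + v) :
    (udagB : X)
      = (B.orthogonalProjectionOnto udag : X)
        + (OmegaBinv (B.orthogonalProjectionOnto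
            (Omega (udag - (B.orthogonalProjectionOnto udag : X)))) : X)
    ∧ ((∀ x ∈ B, ∀ w ∈ Bᗮ, ⟪x, Omega w⟫ = 0) →
        (udagB : X) = (B.orthogonalProjectionOnto udag : X)) := by
  set qB : B := B.orthogonalProjectionOnto udag with hqB
  have hdiff : Omega ((udagB : X)) = Omega udag + v := by
    have : Omega ((udagB : X) + uperp0) - Omega (udag + uperp0) = v := by
      rw [h1, h2]; abel
    simp only [map_add] at this
    have h := this
    linear_combination (norm := abel_nf) h
  have hPv : B.orthogonalProjectionOnto v = 0 :=
    Submodule.orthogonalProjectionOnto_apply_of_mem_orthogonal hv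
  have hsplit : Omega udag = Omega (qB : X) + Omega (udag - (qB : X)) := by
    rw [← map_add]; congr 1; abel
  have hkey : OmegaB udagB
      = OmegaB qB + B.orthogonalProjectionOnto (Omega (udag - (qB : X))) := by
    rw [hOB udagB, hOB qB, hdiff, hsplit]
    simp [map_add, hPv]
  have hmain : udagB = qB + OmegaBinv (B.orthogonalProjectionOnto (Omega (udag - (qB : X)))) := by
    have := congrArg OmegaBinv hkey
    rw [hinv1, map_add, hinv1] at this
    exact this
  constructor
  · simp [hmain]
  · intro huncorr
    have hperp : udag - (qB : X) ∈ Bᗮ := B.sub_starProjection_mem_orthogonal udag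
    have hOmem : Omega (udag - (qB : X)) ∈ Bᗮ := by
      intro x hx
      exact huncorr x hx _ hperp
    have hP0 : B.orthogonalProjectionOnto (Omega (udag - (qB : X))) = 0 :=
      Submodule.orthogonalProjectionOnto_apply_of_mem_orthogonal hOmem
    rw [hmain, hP0, map_zero, add_zero]
end

section
/- If D : [0,∞) → Sym(ℬ) is a differentiable curve of symmetric operators on a finite-dimensional inner product space ℬ satisfying D'(t) = -2 D(t)², with D(0) symmetric positive definite with minimum eigenvalue m_0 > 0, then D(t) = (D(0)^{-1} + 2tI)^{-1}; in particular every eigenvector v of D(0) with eigenvalue λ(0) remains an eigenvector of D(t) with eigenvalue λ(t) = 1/(λ(0)^{-1} + 2t), and for every unit vector v, ⟨v, D(t)v⟩ ≥ 1/(m_0^{-1} + 2t). -/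
open scoped RealInnerProductSpace

/-- Gronwall-type vanishing lemma: a function with `f 0 = 0` whose derivative is bounded
linearly by its norm vanishes at `T`. -/
lemma riccati_gronwall_zero {E : Type*} [NormedAddCommGroup E] [NormedSpace ℝ E]
    (f f' : ℝ → E) (T M : ℝ) (hT : 0 ≤ T)
    (hc : ContinuousOn f (Set.Icc 0 T))
    (hd : ∀ x ∈ Set.Ico 0 T, HasDerivWithinAt f (f' x) (Set.Ici x) x)
    (hb : ∀ x ∈ Set.Ico 0 T, ‖f' x‖ ≤ M * ‖f x‖)
    (h0 : f 0 = 0) : f T = 0 := by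
  have key := norm_le_gronwallBound_of_norm_deriv_right_le (δ := 0) (K := M) (ε := 0)
    hc hd (by simp [h0]) (fun x hx => by simpa using hb x hx) T ⟨hT, le_rfl⟩
  rw [gronwallBound_ε0_δ0] at key
  simpa using le_antisymm key (norm_nonneg _)

/-- Cauchy–Schwarz for a nonnegative symmetric continuous bilinear form. -/
lemma riccati_form_cs {B : Type*} [NormedAddCommGroup B] [InnerProductSpace ℝ B]
    (A : B →L[ℝ] B) (hA : ∀ a b : B, ⟪A a, b⟫ = ⟪a, A b⟫)
    (hpos : ∀ w : B, 0 ≤ ⟪A w, w⟫) (x y : B) :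
    ⟪A x, y⟫ ^ 2 ≤ ⟪A x, x⟫ * ⟪A y, y⟫ := by
  have key : ∀ s : ℝ, 0 ≤ ⟪A y, y⟫ * (s * s) + (2 * ⟪A x, y⟫) * s + ⟪A x, x⟫ := by
    intro s
    have h := hpos (x + s • y)
    have e1 : ⟪A y, x⟫ = ⟪A x, y⟫ := by
      rw [hA y x, real_inner_comm]
    simp only [map_add, map_smul, inner_add_left, inner_add_right, real_inner_smul_left,
      real_inner_smul_right, e1] at h
    nlinarith [h]
  have hd := discrim_le_zero key
  rw [discrim] at hd
  nlinarith [hd]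

set_option maxHeartbeats 1000000 in
/-- Operator Riccati equation: if `D' = -2D²` with `D(0)` symmetric positive definite with
minimum eigenvalue `m₀ > 0`, then `D(t) = (D(0)⁻¹ + 2tI)⁻¹`; eigenvectors of `D(0)` remain
eigenvectors with eigenvalue `(λ(0)⁻¹ + 2t)⁻¹`, and `⟨v, D(t)v⟩ ≥ (m₀⁻¹ + 2t)⁻¹` for unit `v`. -/
theorem operator_riccati_solution
    {B : Type*} [NormedAddCommGroup B] [InnerProductSpace ℝ B] [FiniteDimensional ℝ B]
    (D : ℝ → B →L[ℝ] B)
    (hsymm : ∀ t ∈ Set.Ici (0 : ℝ), ∀ a b : B, ⟪D t a, b⟫ = ⟪a, D t b⟫)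
    (hflow : ∀ t ∈ Set.Ici (0 : ℝ),
      HasDerivWithinAt D ((-2 : ℝ) • ((D t).comp (D t))) (Set.Ici (0 : ℝ)) t)
    (m0 : ℝ) (hm0 : 0 < m0)
    (hmin : ∀ v : B, ‖v‖ = 1 → m0 ≤ ⟪v, D 0 v⟫)
    (hmin' : ∃ v : B, ‖v‖ = 1 ∧ ⟪v, D 0 v⟫ = m0)
    (D0inv : B →L[ℝ] B)
    (hinv1 : (D 0).comp D0inv = ContinuousLinearMap.id ℝ B)
    (hinv2 : D0inv.comp (D 0) = ContinuousLinearMap.id ℝ B) :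
    (∀ t ∈ Set.Ici (0 : ℝ),
        (D t).comp (D0inv + (2 * t) • ContinuousLinearMap.id ℝ B)
          = ContinuousLinearMap.id ℝ B
      ∧ (D0inv + (2 * t) • ContinuousLinearMap.id ℝ B).comp (D t)
          = ContinuousLinearMap.id ℝ B)
    ∧ (∀ (v : B) (lam : ℝ), D 0 v = lam • v →
        ∀ t ∈ Set.Ici (0 : ℝ), D t v = (lam⁻¹ + 2 * t)⁻¹ • v)
    ∧ (∀ t ∈ Set.Ici (0 : ℝ), ∀ v : B, ‖v‖ = 1 →
        (m0⁻¹ + 2 * t)⁻¹ ≤ ⟪v, D t v⟫) := by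
  classical
  set idB := ContinuousLinearMap.id ℝ B with hidB
  have idB_apply : ∀ w : B, idB w = w := fun w => rfl
  set Kf : ℝ → B →L[ℝ] B := fun s => D0inv + (2 * s) • idB with hKf
  -- positivity of D 0
  have hD0pos : ∀ w : B, m0 * ‖w‖ ^ 2 ≤ ⟪w, D 0 w⟫ := by
    intro w
    rcases eq_or_ne w 0 with rfl | hw
    · simp
    · have hn : (0:ℝ) < ‖w‖ := norm_pos_iff.2 hw
      have hu : ‖(‖w‖⁻¹ • w)‖ = 1 := by
        rw [norm_smul, norm_inv, norm_norm, inv_mul_cancel₀ hn.ne']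
      have h := hmin _ hu
      rw [map_smul, real_inner_smul_left, real_inner_smul_right] at h
      have h2 := mul_le_mul_of_nonneg_right h (by positivity : (0:ℝ) ≤ ‖w‖ * ‖w‖)
      have h3 : ‖w‖⁻¹ * (‖w‖⁻¹ * ⟪w, D 0 w⟫) * (‖w‖ * ‖w‖) = ⟪w, D 0 w⟫ := by
        field_simp
      rw [h3] at h2
      nlinarith [h2]
  -- derivative of Kf
  have hKderiv : ∀ s : ℝ, HasDerivAt Kf ((2:ℝ) • idB) s := by
    intro s
    have h1 : HasDerivAt (fun s : ℝ => 2 * s) 2 s := by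
      simpa using (hasDerivAt_id s).const_mul (2:ℝ)
    simpa [hKf] using (h1.smul_const idB).const_add D0inv
  have hKcont : Continuous Kf := by
    have : Differentiable ℝ Kf := fun s => (hKderiv s).differentiableAt
    exact this.continuous
  -- Part 1
  have key : ∀ t ∈ Set.Ici (0 : ℝ),
      (D t).comp (Kf t) = idB ∧ (Kf t).comp (D t) = idB := by
    intro T hT
    have hT0 : (0:ℝ) ≤ T := hT
    have hDcont : ContinuousOn D (Set.Icc 0 T) := fun s hs =>
      ((hflow s hs.1).continuousWithinAt).mono (fun x hx => hx.1)
    obtain ⟨M, hM⟩ := isCompact_Icc.exists_bound_of_continuousOn hDcont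
    constructor
    · -- Q s = D s ∘ K s - id
      set Q : ℝ → B →L[ℝ] B := fun s => (D s).comp (Kf s) - idB with hQ
      have hQT : Q T = 0 := by
        apply riccati_gronwall_zero Q (fun s => (-2:ℝ) • ((D s).comp (Q s))) T (2 * M) hT0
        · exact ((hDcont.clm_comp hKcont.continuousOn).sub continuousOn_const)
        · intro x hx
          have hD' : HasDerivWithinAt D ((-2 : ℝ) • ((D x).comp (D x))) (Set.Ici x) x :=
            (hflow x hx.1).mono (Set.Ici_subset_Ici.2 hx.1)
          have hK' : HasDerivWithinAt Kf ((2:ℝ) • idB) (Set.Ici x) x :=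
            (hKderiv x).hasDerivWithinAt
          have hprod := (hD'.clm_comp hK').sub_const idB
          convert hprod using 1
          ext v
          simp only [hQ, ContinuousLinearMap.smul_apply, ContinuousLinearMap.comp_apply,
            ContinuousLinearMap.sub_apply, ContinuousLinearMap.add_apply,
            ContinuousLinearMap.coe_id', id_eq, map_sub, map_smul, map_add]
          module
        · intro x hx
          have h1 : ‖(D x).comp (Q x)‖ ≤ ‖D x‖ * ‖Q x‖ := ContinuousLinearMap.opNorm_comp_le _ _
          have h2 : ‖D x‖ ≤ M := hM x ⟨hx.1, hx.2.le⟩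
          show ‖(-2:ℝ) • ((D x).comp (Q x))‖ ≤ 2 * M * ‖Q x‖
          have hns := @norm_smul ℝ (B →L[ℝ] B) _ _ _ _ (-2:ℝ) ((D x).comp (Q x))
          rw [hns, Real.norm_eq_abs]
          norm_num
          nlinarith [norm_nonneg (Q x), norm_nonneg ((D x).comp (Q x)), h1, h2,
            mul_le_mul_of_nonneg_right h2 (norm_nonneg (Q x))]
        · simp only [hQ, hKf]
          ext v
          simp [hinv1]
      have := sub_eq_zero.1 hQT
      simpa [hQ] using this
    · -- P s = K s ∘ D s - id
      set P : ℝ → B →L[ℝ] B := fun s => (Kf s).comp (D s) - idB with hP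
      have hPT : P T = 0 := by
        apply riccati_gronwall_zero P (fun s => (-2:ℝ) • ((P s).comp (D s))) T (2 * M) hT0
        · exact ((hKcont.continuousOn.clm_comp hDcont).sub continuousOn_const)
        · intro x hx
          have hD' : HasDerivWithinAt D ((-2 : ℝ) • ((D x).comp (D x))) (Set.Ici x) x :=
            (hflow x hx.1).mono (Set.Ici_subset_Ici.2 hx.1)
          have hK' : HasDerivWithinAt Kf ((2:ℝ) • idB) (Set.Ici x) x :=
            (hKderiv x).hasDerivWithinAt
          have hprod := (hK'.clm_comp hD').sub_const idB
          convert hprod using 1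
          ext v
          simp only [hP, ContinuousLinearMap.smul_apply, ContinuousLinearMap.comp_apply,
            ContinuousLinearMap.sub_apply, ContinuousLinearMap.add_apply,
            ContinuousLinearMap.coe_id', id_eq, map_sub, map_smul, map_add]
          module
        · intro x hx
          have h1 : ‖(P x).comp (D x)‖ ≤ ‖P x‖ * ‖D x‖ := ContinuousLinearMap.opNorm_comp_le _ _
          have h2 : ‖D x‖ ≤ M := hM x ⟨hx.1, hx.2.le⟩
          show ‖(-2:ℝ) • ((P x).comp (D x))‖ ≤ 2 * M * ‖P x‖
          have hns := @norm_smul ℝ (B →L[ℝ] B) _ _ _ _ (-2:ℝ) ((P x).comp (D x))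
          rw [hns, Real.norm_eq_abs]
          norm_num
          nlinarith [norm_nonneg (P x), norm_nonneg ((P x).comp (D x)), h1, h2,
            mul_le_mul_of_nonneg_right h2 (norm_nonneg (P x))]
        · simp only [hP, hKf]
          ext v
          simp [hinv2]
      have := sub_eq_zero.1 hPT
      simpa [hP] using this
  -- Part 2
  have part2 : ∀ (v : B) (lam : ℝ), D 0 v = lam • v →
      ∀ t ∈ Set.Ici (0 : ℝ), D t v = (lam⁻¹ + 2 * t)⁻¹ • v := by
    intro v lam hv t ht
    rcases eq_or_ne v 0 with rfl | hv0
    · simp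
    · have hlam : m0 ≤ lam := by
        have h := hD0pos v
        rw [hv, real_inner_smul_right, real_inner_self_eq_norm_sq] at h
        have hn : (0:ℝ) < ‖v‖ ^ 2 := pow_pos (norm_pos_iff.2 hv0) 2
        nlinarith [h, hn]
      have hlam0 : (0:ℝ) < lam := hm0.trans_le hlam
      have hc0 : (0:ℝ) < lam⁻¹ + 2 * t := by
        have h1 : (0:ℝ) < lam⁻¹ := inv_pos.2 hlam0
        have h2 : (0:ℝ) ≤ t := Set.mem_Ici.1 ht
        linarith
      have hinvv : D0inv v = lam⁻¹ • v := by
        have h1 : D0inv (D 0 v) = v := by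
          have := ContinuousLinearMap.ext_iff.1 hinv2 v
          simpa [idB_apply] using this
        rw [hv, map_smul] at h1
        have h4 : lam⁻¹ • (lam • D0inv v) = lam⁻¹ • v := by rw [h1]
        rwa [smul_smul, inv_mul_cancel₀ hlam0.ne', one_smul] at h4
      have h2 := ContinuousLinearMap.ext_iff.1 (key t ht).1 v
      have hKv : (Kf t) v = (lam⁻¹ + 2 * t) • v := by
        simp only [hKf, ContinuousLinearMap.add_apply, ContinuousLinearMap.smul_apply,
          idB_apply, hinvv, add_smul]
      have h3 : (lam⁻¹ + 2 * t) • D t v = v := by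
        rw [← map_smul, ← hKv]
        simpa [idB_apply] using h2
      have h4 : (lam⁻¹ + 2 * t)⁻¹ • ((lam⁻¹ + 2 * t) • D t v) = (lam⁻¹ + 2 * t)⁻¹ • v := by
        rw [h3]
      rwa [smul_smul, inv_mul_cancel₀ hc0.ne', one_smul] at h4
  refine ⟨key, part2, ?_⟩
  -- Part 3
  have hD0invsymm : ∀ a b : B, ⟪D0inv a, b⟫ = ⟪a, D0inv b⟫ := by
    intro a b
    have ha : D 0 (D0inv a) = a := by
      have := ContinuousLinearMap.ext_iff.1 hinv1 a; simpa [idB_apply] using this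
    have hb : D 0 (D0inv b) = b := by
      have := ContinuousLinearMap.ext_iff.1 hinv1 b; simpa [idB_apply] using this
    calc ⟪D0inv a, b⟫ = ⟪D0inv a, D 0 (D0inv b)⟫ := by rw [hb]
      _ = ⟪D 0 (D0inv a), D0inv b⟫ := (hsymm 0 Set.self_mem_Ici _ _).symm
      _ = ⟪a, D0inv b⟫ := by rw [ha]
  have hD0inv_nonneg : ∀ w : B, 0 ≤ ⟪D0inv w, w⟫ := by
    intro w
    have hw : D 0 (D0inv w) = w := by
      have := ContinuousLinearMap.ext_iff.1 hinv1 w; simpa [idB_apply] using this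
    have h1 := hD0pos (D0inv w)
    rw [hw] at h1
    nlinarith [norm_nonneg (D0inv w), h1]
  have hD0inv_le : ∀ w : B, ⟪D0inv w, w⟫ ≤ m0⁻¹ * ‖w‖ ^ 2 := by
    intro w
    have hw : D 0 (D0inv w) = w := by
      have := ContinuousLinearMap.ext_iff.1 hinv1 w; simpa [idB_apply] using this
    have h1 := hD0pos (D0inv w)
    rw [hw] at h1
    have h2 : ⟪D0inv w, w⟫ ≤ ‖D0inv w‖ * ‖w‖ := real_inner_le_norm _ _
    rw [inv_mul_eq_div, le_div_iff₀ hm0]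
    nlinarith [h1, h2, norm_nonneg (D0inv w), norm_nonneg w,
      sq_nonneg (‖w‖ - m0 * ‖D0inv w‖), hm0]
  -- the operator A = m0⁻¹ • id - D0inv
  set A : B →L[ℝ] B := m0⁻¹ • idB - D0inv with hA
  have hAsymm : ∀ a b : B, ⟪A a, b⟫ = ⟪a, A b⟫ := by
    intro a b
    simp only [hA, ContinuousLinearMap.sub_apply, ContinuousLinearMap.smul_apply,
      idB_apply, inner_sub_left, inner_sub_right,
      real_inner_smul_left, real_inner_smul_right]
    rw [hD0invsymm]
  have hApos : ∀ w : B, 0 ≤ ⟪A w, w⟫ := by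
    intro w
    simp only [hA, ContinuousLinearMap.sub_apply, ContinuousLinearMap.smul_apply,
      idB_apply, inner_sub_left, real_inner_smul_left, real_inner_self_eq_norm_sq]
    have h1 := hD0inv_le w
    linarith [h1]
  intro t ht v hv
  have ht0 : (0:ℝ) ≤ t := ht
  set c : ℝ := m0⁻¹ + 2 * t with hcdef
  have hcpos : (0:ℝ) < c := by
    have := inv_pos.2 hm0; rw [hcdef]; linarith
  set u : B := D t v with hu
  -- v = c • u - A u
  have hKu : D0inv u + (2 * t) • u = v := by
    have h2 := ContinuousLinearMap.ext_iff.1 (key t ht).2 v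
    simpa [hKf, hu, idB_apply] using h2
  have hvAu : v = c • u - A u := by
    rw [← hKu]
    simp only [hA, hcdef, ContinuousLinearMap.sub_apply, ContinuousLinearMap.smul_apply,
      idB_apply]
    module
  -- A ≤ c • id on the relevant vector
  have hAle : ∀ w : B, ⟪A w, w⟫ ≤ c * ‖w‖ ^ 2 := by
    intro w
    simp only [hA, ContinuousLinearMap.sub_apply, ContinuousLinearMap.smul_apply,
      idB_apply, inner_sub_left, real_inner_smul_left, real_inner_self_eq_norm_sq]
    have h1 := hD0inv_nonneg w
    have h3 : m0⁻¹ ≤ c := by rw [hcdef]; linarith [ht0]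
    nlinarith [h1, sq_nonneg ‖w‖, mul_le_mul_of_nonneg_right h3 (sq_nonneg ‖w‖)]
  -- main computation
  have hcs := riccati_form_cs A hAsymm hApos u (A u)
  have hApAu : ⟪A (A u), A u⟫ ≤ c * ‖A u‖ ^ 2 := hAle (A u)
  have hAuu : 0 ≤ ⟪A u, u⟫ := hApos u
  have hq : ‖A u‖ ^ 2 ≤ c * ⟪A u, u⟫ := by
    have hn : ⟪A u, A u⟫ = ‖A u‖ ^ 2 := real_inner_self_eq_norm_sq (A u)
    rcases eq_or_lt_of_le (sq_nonneg ‖A u‖) with h0 | h0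
    · rw [← h0]; positivity
    · have h1 : (‖A u‖ ^ 2) ^ 2 ≤ ⟪A u, u⟫ * (c * ‖A u‖ ^ 2) := by
        calc (‖A u‖ ^ 2) ^ 2 = ⟪A u, A u⟫ ^ 2 := by rw [hn]
          _ ≤ ⟪A u, u⟫ * ⟪A (A u), A u⟫ := hcs
          _ ≤ ⟪A u, u⟫ * (c * ‖A u‖ ^ 2) := by
              exact mul_le_mul_of_nonneg_left hApAu hAuu
      have h2' : ‖A u‖ ^ 2 * ‖A u‖ ^ 2 ≤ (c * ⟪A u, u⟫) * ‖A u‖ ^ 2 := by nlinarith [h1]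
      exact le_of_mul_le_mul_right h2' h0
  -- expand inner products
  have hvu : ⟪v, u⟫ = c * ⟪u, u⟫ - ⟪A u, u⟫ := by
    rw [hvAu, inner_sub_left, real_inner_smul_left]
  have hvv : (1:ℝ) = c ^ 2 * ⟪u, u⟫ - 2 * c * ⟪A u, u⟫ + ‖A u‖ ^ 2 := by
    have h1 : ⟪v, v⟫ = ‖v‖ ^ 2 := real_inner_self_eq_norm_sq v
    have h2 : ⟪u, A u⟫ = ⟪A u, u⟫ := real_inner_comm _ _
    have h3 : ⟪A u, A u⟫ = ‖A u‖ ^ 2 := real_inner_self_eq_norm_sq (A u)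
    have h4 : ⟪v, v⟫ = (1:ℝ) := by rw [h1, hv]; norm_num
    have hexp : ⟪v, v⟫ = c * (c * ⟪u, u⟫ - ⟪A u, u⟫) - (c * ⟪A u, u⟫ - ‖A u‖ ^ 2) := by
      rw [hvAu]
      simp only [inner_sub_left, inner_sub_right, real_inner_smul_left,
        real_inner_smul_right, h2, h3]
      ring
    have h5 : (1:ℝ) = c * (c * ⟪u, u⟫ - ⟪A u, u⟫) - (c * ⟪A u, u⟫ - ‖A u‖ ^ 2) := by
      rw [← h4, hexp]
    linear_combination h5
  -- conclude
  have hgoal : 1 ≤ ⟪v, u⟫ * c := by nlinarith [hvu, hvv, hq, hAuu, hcpos]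
  rw [inv_eq_one_div, div_le_iff₀ hcpos]
  exact hgoal
end

section
/- (Algebraic convergence of linear TEKI.) Suppose e : [0,∞) → ℬ is differentiable with de/dt = -C(t) Ω_ℬ e(t), where Ω_ℬ is symmetric positive definite on ℬ, C(t) is symmetric positive semidefinite, and D(t) := Ω_ℬ^{1/2} C(t) Ω_ℬ^{1/2} satisfies ⟨w, D(t)w⟩ ≥ ‖w‖²/(m_0^{-1} + 2t) for all w ∈ ℬ and some m_0 > 0. Then with ‖u‖²_Z := ⟨Ω_ℬ u, u⟩, one has ‖e(t)‖²_Z ≤ ‖e(0)‖²_Z / (1 + 2 m_0 t) for all t ≥ 0; in particular e(t) → 0 at rate O(t^{-1/2}). -/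
open scoped RealInnerProductSpace

/-- Coercivity of a positive-definite symmetric operator on a finite-dimensional space. -/
lemma pd_coercive {B : Type*} [NormedAddCommGroup B] [InnerProductSpace ℝ B]
    [FiniteDimensional ℝ B] [Nontrivial B] (OmegaB : B →ₗ[ℝ] B)
    (hOpd : ∀ v : B, v ≠ 0 → 0 < ⟪v, OmegaB v⟫) :
    ∃ c : ℝ, 0 < c ∧ ∀ v : B, c * ‖v‖ ^ 2 ≤ ⟪v, OmegaB v⟫ := by
  have hcont : Continuous fun v : B => ⟪v, OmegaB v⟫ :=
    continuous_id.inner (OmegaB.continuous_of_finiteDimensional.comp continuous_id)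
  have hsph : (Metric.sphere (0 : B) 1).Nonempty :=
    NormedSpace.sphere_nonempty.2 zero_le_one
  obtain ⟨v0, hv0mem, hv0min⟩ :=
    (isCompact_sphere (0 : B) 1).exists_isMinOn hsph hcont.continuousOn
  have hv0norm : ‖v0‖ = 1 := by simpa using hv0mem
  have hv0ne : v0 ≠ 0 := by
    intro h; rw [h, norm_zero] at hv0norm; norm_num at hv0norm
  refine ⟨⟪v0, OmegaB v0⟫, hOpd v0 hv0ne, fun v => ?_⟩
  rcases eq_or_ne v 0 with rfl | hv
  · simp
  · have hvn : (0 : ℝ) < ‖v‖ := norm_pos_iff.2 hv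
    set u : B := ‖v‖⁻¹ • v with hu
    have humem : u ∈ Metric.sphere (0 : B) 1 := by
      simp [hu, norm_smul, abs_of_pos (inv_pos.2 hvn), inv_mul_cancel₀ hvn.ne']
    have hle : ⟪v0, OmegaB v0⟫ ≤ ⟪u, OmegaB u⟫ := hv0min humem
    have hscale : ⟪u, OmegaB u⟫ = ‖v‖⁻¹ ^ 2 * ⟪v, OmegaB v⟫ := by
      simp [hu, map_smul, real_inner_smul_left, real_inner_smul_right]
      ring
    rw [hscale] at hle
    have h2 : ⟪v0, OmegaB v0⟫ * ‖v‖ ^ 2 ≤ ‖v‖⁻¹ ^ 2 * ⟪v, OmegaB v⟫ * ‖v‖ ^ 2 := by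
      exact mul_le_mul_of_nonneg_right hle (by positivity)
    calc ⟪v0, OmegaB v0⟫ * ‖v‖ ^ 2 ≤ ‖v‖⁻¹ ^ 2 * ⟪v, OmegaB v⟫ * ‖v‖ ^ 2 := h2
      _ = ⟪v, OmegaB v⟫ := by
          field_simp

/-- Algebraic convergence of linear TEKI: if `e' = -C(t)Ω_ℬ e` and
`D(t) = Ω_ℬ^{1/2} C(t) Ω_ℬ^{1/2}` satisfies `⟨w, D(t)w⟩ ≥ ‖w‖²/(m₀⁻¹ + 2t)`, then the
`Z`-norm `‖e‖²_Z = ⟨Ω_ℬ e, e⟩` decays like `‖e(0)‖²_Z/(1 + 2m₀t)`, so `e(t) → 0`. -/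
theorem teki_linear_algebraic_convergence
    {B : Type*} [NormedAddCommGroup B] [InnerProductSpace ℝ B] [FiniteDimensional ℝ B]
    (OmegaB Ohalf : B →ₗ[ℝ] B)
    (hOsym : ∀ a b : B, ⟪OmegaB a, b⟫ = ⟪a, OmegaB b⟫)
    (hOpd : ∀ v : B, v ≠ 0 → 0 < ⟪v, OmegaB v⟫)
    (hhalfsym : ∀ a b : B, ⟪Ohalf a, b⟫ = ⟪a, Ohalf b⟫)
    (hhalf : Ohalf ∘ₗ Ohalf = OmegaB)
    (C : ℝ → B →ₗ[ℝ] B)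
    (hCsym : ∀ t, ∀ a b : B, ⟪C t a, b⟫ = ⟪a, C t b⟫)
    (hCpsd : ∀ t, ∀ v : B, 0 ≤ ⟪v, C t v⟫)
    (m0 : ℝ) (hm0 : 0 < m0)
    (hD : ∀ t ∈ Set.Ici (0 : ℝ), ∀ w : B,
      ‖w‖ ^ 2 / (m0⁻¹ + 2 * t) ≤ ⟪w, Ohalf (C t (Ohalf w))⟫)
    (e : ℝ → B)
    (hflow : ∀ t ∈ Set.Ici (0 : ℝ),
      HasDerivWithinAt e (-(C t (OmegaB (e t)))) (Set.Ici (0 : ℝ)) t) :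
    (∀ t ∈ Set.Ici (0 : ℝ),
      ⟪OmegaB (e t), e t⟫ ≤ ⟪OmegaB (e 0), e 0⟫ / (1 + 2 * m0 * t))
    ∧ Filter.Tendsto e Filter.atTop (nhds 0) := by
  -- notation
  set V : ℝ → ℝ := fun t => ⟪OmegaB (e t), e t⟫ with hV
  set G : ℝ → ℝ := fun t => (1 + 2 * m0 * t) * V t with hG
  have hhalf' : ∀ v : B, Ohalf (Ohalf v) = OmegaB v := fun v =>
    congrFun (congrArg DFunLike.coe hhalf) v
  -- V is nonnegative
  have hVnonneg : ∀ t, 0 ≤ V t := by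
    intro t
    have : V t = ⟪Ohalf (e t), Ohalf (e t)⟫ := by
      rw [hV]
      simp only
      rw [← hhalf' (e t), hhalfsym]
    rw [this]
    exact real_inner_self_nonneg
  -- derivative of V
  have hVderiv : ∀ t ∈ Set.Ici (0 : ℝ),
      HasDerivWithinAt V (-2 * ⟪OmegaB (e t), C t (OmegaB (e t))⟫) (Set.Ici (0 : ℝ)) t := by
    intro t ht
    have he := hflow t ht
    have hOe : HasDerivWithinAt (fun s => OmegaB (e s))
        (OmegaB (-(C t (OmegaB (e t))))) (Set.Ici (0 : ℝ)) t := by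
      exact (OmegaB.toContinuousLinearMap.hasFDerivAt.comp_hasDerivWithinAt t he)
    have := hOe.inner ℝ he
    have heq : ⟪OmegaB (e t), -(C t (OmegaB (e t)))⟫
        + ⟪OmegaB (-(C t (OmegaB (e t)))), e t⟫
        = -2 * ⟪OmegaB (e t), C t (OmegaB (e t))⟫ := by
      have h2 : ⟪OmegaB (-(C t (OmegaB (e t)))), e t⟫
          = ⟪OmegaB (e t), -(C t (OmegaB (e t)))⟫ := by
        rw [hOsym]; exact real_inner_comm _ _
      rw [h2, inner_neg_right]
      ring
    rw [heq] at this
    exact this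
  -- key pointwise bound
  have hkey : ∀ t ∈ Set.Ici (0 : ℝ),
      V t ≤ (m0⁻¹ + 2 * t) * ⟪OmegaB (e t), C t (OmegaB (e t))⟫ := by
    intro t ht
    have htpos : (0 : ℝ) < m0⁻¹ + 2 * t := by
      have : (0 : ℝ) ≤ t := ht
      positivity
    have hw := hD t ht (Ohalf (e t))
    have hnorm : ‖Ohalf (e t)‖ ^ 2 = V t := by
      rw [← real_inner_self_eq_norm_sq, hV]
      simp only
      rw [hhalfsym, hhalf' (e t)]
      exact real_inner_comm _ _
    rw [hhalf' (e t)] at hw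
    rw [← hhalfsym (Ohalf (e t)) (C t (OmegaB (e t))), hhalf' (e t)] at hw
    rw [hnorm] at hw
    rw [div_le_iff₀ htpos] at hw
    rw [mul_comm]
    exact hw
  -- derivative of G and nonpositivity on the interior
  have hGderiv : ∀ t ∈ Set.Ici (0 : ℝ),
      HasDerivWithinAt G
        (2 * m0 * V t + (1 + 2 * m0 * t) * (-2 * ⟪OmegaB (e t), C t (OmegaB (e t))⟫))
        (Set.Ici (0 : ℝ)) t := by
    intro t ht
    have h1 : HasDerivWithinAt (fun s => 1 + 2 * m0 * s) (2 * m0) (Set.Ici (0 : ℝ)) t := by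
      simpa using (((hasDerivAt_id t).const_mul (2 * m0)).const_add 1).hasDerivWithinAt
    exact h1.mul (hVderiv t ht)
  have hGnonpos : ∀ t ∈ Set.Ici (0 : ℝ),
      2 * m0 * V t + (1 + 2 * m0 * t) * (-2 * ⟪OmegaB (e t), C t (OmegaB (e t))⟫) ≤ 0 := by
    intro t ht
    have ht' : (0 : ℝ) ≤ t := ht
    have hP : 0 ≤ ⟪OmegaB (e t), C t (OmegaB (e t))⟫ := hCpsd t _
    have hk := hkey t ht
    have hmi : m0 * m0⁻¹ = 1 := mul_inv_cancel₀ hm0.ne'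
    nlinarith [mul_le_mul_of_nonneg_left hk (le_of_lt hm0)]
  -- G is antitone on Ici 0
  have hGcont : ContinuousOn G (Set.Ici (0 : ℝ)) := fun t ht =>
    ((hGderiv t ht).continuousWithinAt)
  have hGanti : AntitoneOn G (Set.Ici (0 : ℝ)) := by
    apply antitoneOn_of_deriv_nonpos (convex_Ici 0) hGcont
    · intro t ht
      rw [interior_Ici] at ht
      exact (((hGderiv t (Set.mem_Ici.2 (le_of_lt (Set.mem_Ioi.1 ht)))).hasDerivAt (Ici_mem_nhds ht)).differentiableAt).differentiableWithinAt
    · intro t ht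
      rw [interior_Ici] at ht
      have hd := (hGderiv t (Set.mem_Ici.2 (le_of_lt (Set.mem_Ioi.1 ht)))).hasDerivAt (Ici_mem_nhds ht)
      rw [hd.deriv]
      exact hGnonpos t (Set.mem_Ici.2 (le_of_lt (Set.mem_Ioi.1 ht)))
  -- main decay estimate
  have hmain : ∀ t ∈ Set.Ici (0 : ℝ), V t ≤ V 0 / (1 + 2 * m0 * t) := by
    intro t ht
    have ht' : (0 : ℝ) ≤ t := ht
    have hpos : (0 : ℝ) < 1 + 2 * m0 * t := by positivity
    have := hGanti (Set.self_mem_Ici) ht ht'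
    rw [le_div_iff₀ hpos]
    have hG0 : G 0 = V 0 := by simp [hG]
    rw [hG0] at this
    calc V t * (1 + 2 * m0 * t) = G t := by rw [hG]; ring
      _ ≤ V 0 := this
  refine ⟨hmain, ?_⟩
  -- convergence to zero
  rcases subsingleton_or_nontrivial B with hs | hn
  · have : ∀ t, e t = 0 := fun t => Subsingleton.elim _ _
    simpa [funext this] using tendsto_const_nhds (α := B) (f := Filter.atTop (α := ℝ))
  · obtain ⟨c, hc, hcoer⟩ := pd_coercive OmegaB hOpd
    have hnorm_sq : ∀ t ∈ Set.Ici (0 : ℝ), ‖e t‖ ^ 2 ≤ V 0 / c / (1 + 2 * m0 * t) := by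
      intro t ht
      have ht' : (0 : ℝ) ≤ t := ht
      have hpos : (0 : ℝ) < 1 + 2 * m0 * t := by positivity
      have h1 : c * ‖e t‖ ^ 2 ≤ V t := by
        have := hcoer (e t)
        rw [real_inner_comm] at this
        exact this
      have h2 := hmain t ht
      rw [le_div_iff₀ hpos] at h2
      rw [div_div, le_div_iff₀ (by positivity)]
      nlinarith [mul_le_mul_of_nonneg_right h1 hpos.le, h2]
    have hlim : Filter.Tendsto (fun t => V 0 / c / (1 + 2 * m0 * t)) Filter.atTop (nhds 0) := by
      apply Filter.Tendsto.div_atTop (tendsto_const_nhds)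
      apply Filter.tendsto_atTop_add_const_left
      exact Filter.Tendsto.const_mul_atTop (by positivity) Filter.tendsto_id
    have hsq : Filter.Tendsto (fun t => ‖e t‖ ^ 2) Filter.atTop (nhds 0) := by
      apply squeeze_zero' (g := fun t => V 0 / c / (1 + 2 * m0 * t))
      · filter_upwards with t using by positivity
      · filter_upwards [Filter.eventually_ge_atTop (0 : ℝ)] with t ht
        exact hnorm_sq t ht
      · exact hlim
    have hn : Filter.Tendsto (fun t => ‖e t‖) Filter.atTop (nhds 0) := by
      have h := (Real.continuous_sqrt.tendsto 0).comp hsq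
      rw [Real.sqrt_zero] at h
      refine h.congr fun t => ?_
      simp [Function.comp, Real.sqrt_sq (norm_nonneg _)]
    exact tendsto_zero_iff_norm_tendsto_zero.2 hn
end
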